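/- Let q be a power of a prime, let r ≥ 2 be an integer, and let a = a_1/a_2 ∈ K = F_q(t) for nonzero coprime polynomials a_1, a_2 ∈ F_q[t]. Then for each non-constant polynomial P(T) ∈ F_q[T], the map z ↦ a_2^{q^{r·deg_T(P)}}·Φ^{(z)}_{P(T)}(a) is a polynomial in F_q[t][z] of height at most (2 + deg(a))^{q^{r·deg_T(P)}}, where deg(a) = max{deg_t(a_1), deg_t(a_2)}. -/

import Mathlib

open Polynomial

/-- The map `x ↦ t·x + z·x^q + x^{q^r}` on `K[z]`, where `K = F_q(t)` and the parameter
`z` is the polynomial variable. -/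
noncomputable def drinfeldPolyPhi (q r : ℕ) {Fq : Type*} [Field Fq]
    (x : Polynomial (RatFunc Fq)) : Polynomial (RatFunc Fq) :=
  C RatFunc.X * x + X * x ^ q + x ^ q ^ r

/-- `Φ^{(z)}_{P(T)}(a)` viewed as a polynomial in the parameter `z`, with coefficients
in `K = F_q(t)`. -/
noncomputable def drinfeldPolyAct (q r : ℕ) {Fq : Type*} [Field Fq]
    (P : Polynomial Fq) (a : RatFunc Fq) : Polynomial (RatFunc Fq) :=
  ∑ i ∈ Finset.range (P.natDegree + 1),
    C (algebraMap Fq (RatFunc Fq) (P.coeff i)) * (drinfeldPolyPhi q r)^[i] (C a)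

/-- The height of a polynomial `g ∈ F_q[t][z]`: the maximum of the `t`-degrees of its
coefficients. -/
noncomputable def polyHeight {Fq : Type*} [Field Fq] (g : Polynomial (Polynomial Fq)) : ℕ :=
  g.support.sup fun i => (g.coeff i).natDegree


section DrinfeldAux

variable {Fq : Type*} [Field Fq]

lemma polyHeight_le_iff {g : Polynomial (Polynomial Fq)} {n : ℕ} :
    polyHeight g ≤ n ↔ ∀ i, (g.coeff i).natDegree ≤ n := by
  constructor
  · intro h i
    by_cases hi : i ∈ g.support
    · exact le_trans (Finset.le_sup (f := fun i => (g.coeff i).natDegree) hi) h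
    · simp [Polynomial.notMem_support_iff.mp hi]
  · intro h
    exact Finset.sup_le fun i _ => h i

lemma coeff_natDegree_le_polyHeight (g : Polynomial (Polynomial Fq)) (i : ℕ) :
    (g.coeff i).natDegree ≤ polyHeight g :=
  polyHeight_le_iff.mp le_rfl i

lemma polyHeight_add_le {f g : Polynomial (Polynomial Fq)} {n : ℕ}
    (hf : polyHeight f ≤ n) (hg : polyHeight g ≤ n) : polyHeight (f + g) ≤ n := by
  rw [polyHeight_le_iff]
  intro i
  rw [coeff_add]
  exact (natDegree_add_le _ _).trans
    (max_le (polyHeight_le_iff.mp hf i) (polyHeight_le_iff.mp hg i))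

lemma polyHeight_mul_le (f g : Polynomial (Polynomial Fq)) :
    polyHeight (f * g) ≤ polyHeight f + polyHeight g := by
  rw [polyHeight_le_iff]
  intro k
  rw [coeff_mul]
  apply natDegree_sum_le_of_forall_le
  intro x hx
  exact natDegree_mul_le.trans
    (add_le_add (coeff_natDegree_le_polyHeight f x.1) (coeff_natDegree_le_polyHeight g x.2))

lemma polyHeight_pow_le (f : Polynomial (Polynomial Fq)) (n : ℕ) :
    polyHeight (f ^ n) ≤ n * polyHeight f := by
  induction n with
  | zero =>
    rw [pow_zero, polyHeight_le_iff]
    intro i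
    rw [coeff_one]
    split <;> simp
  | succ n ih =>
    calc polyHeight (f ^ (n + 1)) = polyHeight (f ^ n * f) := by rw [pow_succ]
      _ ≤ polyHeight (f ^ n) + polyHeight f := polyHeight_mul_le _ _
      _ ≤ n * polyHeight f + polyHeight f := Nat.add_le_add_right ih _
      _ = (n + 1) * polyHeight f := by ring

lemma polyHeight_C_le (p : Polynomial Fq) : polyHeight (C p) ≤ p.natDegree := by
  rw [polyHeight_le_iff]
  intro i
  rw [coeff_C]
  split
  · exact le_rfl
  · simp

lemma polyHeight_X_le : polyHeight (X : Polynomial (Polynomial Fq)) ≤ 0 := by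
  rw [polyHeight_le_iff]
  intro i
  rw [coeff_X]
  split <;> simp

lemma polyHeight_sum_le {ι : Type*} (s : Finset ι) (f : ι → Polynomial (Polynomial Fq)) {n : ℕ}
    (h : ∀ i ∈ s, polyHeight (f i) ≤ n) : polyHeight (∑ i ∈ s, f i) ≤ n := by
  classical
  induction s using Finset.induction_on with
  | empty => simp [polyHeight]
  | insert _ _ hx ih =>
    rw [Finset.sum_insert hx]
    exact polyHeight_add_le (h _ (Finset.mem_insert_self _ _))
      (ih fun i hi => h i (Finset.mem_insert_of_mem hi))

end DrinfeldAux

/-- Integral model of the iterates: `Bseq q r a₁ a₂ i` is `a₂^{q^{r i}}·Φ^{∘i}(a)`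
written as a polynomial with coefficients in `F_q[t]`. -/
noncomputable def Bseq (q r : ℕ) {Fq : Type*} [Field Fq] (a₁ a₂ : Polynomial Fq) :
    ℕ → Polynomial (Polynomial Fq)
  | 0 => C a₁
  | i + 1 =>
      C (X * a₂ ^ (q ^ (r * (i + 1)) - q ^ (r * i))) * Bseq q r a₁ a₂ i
        + X * C (a₂ ^ (q ^ (r * (i + 1)) - q ^ (r * i + 1))) * Bseq q r a₁ a₂ i ^ q
        + Bseq q r a₁ a₂ i ^ q ^ r

lemma key_ring {S : Type*} [CommRing S] (u τ ζ H : S) (q r e f A N : ℕ)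
    (h1 : e + A = N) (h2 : f + q * A = N) (h3 : A * q ^ r = N) :
    τ * u ^ e * (u ^ A * H) + ζ * u ^ f * (u ^ A * H) ^ q + (u ^ A * H) ^ q ^ r
      = u ^ N * (τ * H + ζ * H ^ q + H ^ q ^ r) := by
  have k1 : u ^ e * u ^ A = u ^ N := by rw [← pow_add, h1]
  have k2 : u ^ f * (u ^ A) ^ q = u ^ N := by rw [← pow_mul, mul_comm A q, ← pow_add, h2]
  have k3 : (u ^ A) ^ q ^ r = u ^ N := by rw [← pow_mul, h3]
  calc τ * u ^ e * (u ^ A * H) + ζ * u ^ f * (u ^ A * H) ^ q + (u ^ A * H) ^ q ^ r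
      = (u ^ e * u ^ A) * (τ * H) + (u ^ f * (u ^ A) ^ q) * (ζ * H ^ q)
          + (u ^ A) ^ q ^ r * H ^ q ^ r := by ring
    _ = u ^ N * (τ * H) + u ^ N * (ζ * H ^ q) + u ^ N * H ^ q ^ r := by rw [k1, k2, k3]
    _ = u ^ N * (τ * H + ζ * H ^ q + H ^ q ^ r) := by ring

lemma Bseq_map {Fq : Type*} [Field Fq] (q r : ℕ) (hq : 1 ≤ q) (hr : 1 ≤ r)
    (a₁ a₂ : Polynomial Fq) (a : RatFunc Fq)
    (haa : algebraMap (Polynomial Fq) (RatFunc Fq) a₁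
      = a * algebraMap (Polynomial Fq) (RatFunc Fq) a₂) (i : ℕ) :
    (Bseq q r a₁ a₂ i).map (algebraMap (Polynomial Fq) (RatFunc Fq)) =
      C ((algebraMap (Polynomial Fq) (RatFunc Fq) a₂) ^ q ^ (r * i)) *
        (drinfeldPolyPhi q r)^[i] (C a) := by
  induction i with
  | zero =>
    simp only [Bseq, Polynomial.map_C, Nat.mul_zero, pow_zero, pow_one,
      Function.iterate_zero, id_eq]
    rw [haa, map_mul, mul_comm]
  | succ i ih =>
    have hrle : r * i + 1 ≤ r * (i + 1) := by
      have : r * (i + 1) = r * i + r := by ring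
      omega
    have hle1 : q ^ (r * i) ≤ q ^ (r * (i + 1)) := Nat.pow_le_pow_right hq (by omega)
    have hle2 : q ^ (r * i + 1) ≤ q ^ (r * (i + 1)) := Nat.pow_le_pow_right hq hrle
    have h1 : (q ^ (r * (i + 1)) - q ^ (r * i)) + q ^ (r * i) = q ^ (r * (i + 1)) :=
      Nat.sub_add_cancel hle1
    have h2 : (q ^ (r * (i + 1)) - q ^ (r * i + 1)) + q * q ^ (r * i) = q ^ (r * (i + 1)) := by
      rw [← pow_succ']
      exact Nat.sub_add_cancel hle2
    have h3 : q ^ (r * i) * q ^ r = q ^ (r * (i + 1)) := by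
      rw [← pow_add, Nat.mul_succ]
    simp only [Bseq, Polynomial.map_add, Polynomial.map_mul, Polynomial.map_pow,
      Polynomial.map_C, Polynomial.map_X, map_mul, map_pow, RatFunc.algebraMap_X, ih]
    rw [Function.iterate_succ_apply']
    simp only [drinfeldPolyPhi, map_pow]
    exact key_ring _ _ _ _ q r _ _ _ _ h1 h2 h3

lemma Bseq_height {Fq : Type*} [Field Fq] (q r : ℕ) (hq : 2 ≤ q) (hr : 1 ≤ r)
    (a₁ a₂ : Polynomial Fq) (m : ℕ)
    (h1 : a₁.natDegree ≤ m) (h2 : a₂.natDegree ≤ m) (i : ℕ) :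
    polyHeight (Bseq q r a₁ a₂ i) ≤ (1 + m) * q ^ (r * i) := by
  induction i with
  | zero =>
    simp only [Bseq, Nat.mul_zero, pow_zero, mul_one]
    exact (polyHeight_C_le a₁).trans (by omega)
  | succ i ih =>
    have hrr : r * (i + 1) = r * i + r := by rw [Nat.mul_succ]
    have hq1 : 1 ≤ q := by omega
    have hA1 : 1 ≤ q ^ (r * i) := Nat.one_le_pow _ _ (by omega)
    have hAN : q ^ (r * i) ≤ q ^ (r * (i + 1)) := Nat.pow_le_pow_right hq1 (by omega)
    have hqAN : q * q ^ (r * i) ≤ q ^ (r * (i + 1)) := by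
      rw [← pow_succ']
      exact Nat.pow_le_pow_right hq1 (by omega)
    have h2AN : 2 * q ^ (r * i) ≤ q ^ (r * (i + 1)) := by
      calc 2 * q ^ (r * i) ≤ q * q ^ (r * i) := Nat.mul_le_mul_right _ hq
        _ ≤ q ^ (r * (i + 1)) := hqAN
    have hA2N : q ^ (r * i) * q ^ r = q ^ (r * (i + 1)) := by rw [← pow_add, Nat.mul_succ]
    set A := q ^ (r * i) with hA
    set N := q ^ (r * (i + 1)) with hN
    have b1 : polyHeight (C (X * a₂ ^ (N - A)) * Bseq q r a₁ a₂ i)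
        ≤ (1 + (N - A) * m) + (1 + m) * A := by
      refine (polyHeight_mul_le _ _).trans (add_le_add ?_ ih)
      refine (polyHeight_C_le _).trans ?_
      refine natDegree_mul_le.trans (add_le_add natDegree_X_le ?_)
      exact natDegree_pow_le.trans (Nat.mul_le_mul_left _ h2)
    have b2 : polyHeight (X * C (a₂ ^ (N - q ^ (r * i + 1))) * Bseq q r a₁ a₂ i ^ q)
        ≤ (0 + (N - q * A) * m) + q * ((1 + m) * A) := by
      refine (polyHeight_mul_le _ _).trans (add_le_add ((polyHeight_mul_le _ _).trans
        (add_le_add polyHeight_X_le ?_)) ((polyHeight_pow_le _ _).trans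
        (Nat.mul_le_mul_left _ ih)))
      refine (polyHeight_C_le _).trans (natDegree_pow_le.trans ?_)
      have : q ^ (r * i + 1) = q * A := by rw [pow_succ']
      rw [this]
      exact Nat.mul_le_mul_left _ h2
    have b3 : polyHeight (Bseq q r a₁ a₂ i ^ q ^ r) ≤ q ^ r * ((1 + m) * A) :=
      (polyHeight_pow_le _ _).trans (Nat.mul_le_mul_left _ ih)
    have e3 : (N - A) * m = N * m - A * m := Nat.sub_mul _ _ _
    have e5 : (N - q * A) * m = N * m - (q * A) * m := Nat.sub_mul _ _ _
    have e4 : A * m ≤ N * m := Nat.mul_le_mul_right _ hAN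
    have e7 : (q * A) * m ≤ N * m := Nat.mul_le_mul_right _ hqAN
    have t1 : (1 + (N - A) * m) + (1 + m) * A ≤ (1 + m) * N := by
      have g1 : (1 + m) * A = A + A * m := by ring
      have g2 : (1 + m) * N = N + N * m := by ring
      omega
    have t2 : (0 + (N - q * A) * m) + q * ((1 + m) * A) ≤ (1 + m) * N := by
      have g1 : q * ((1 + m) * A) = q * A + (q * A) * m := by ring
      have g2 : (1 + m) * N = N + N * m := by ring
      omega
    have t3 : q ^ r * ((1 + m) * A) ≤ (1 + m) * N := by
      have : q ^ r * ((1 + m) * A) = (1 + m) * (A * q ^ r) := by ring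
      rw [this, hA2N]
    show polyHeight (_ + _ + _) ≤ (1 + m) * N
    exact polyHeight_add_le (polyHeight_add_le (b1.trans t1) (b2.trans t2)) (b3.trans t3)

lemma final_num (m N : ℕ) (hN : 4 ≤ N) : (1 + m) * N ≤ (2 + m) ^ N := by
  have h1 : N ≤ 2 ^ (N - 1) := by
    have := Nat.lt_two_pow_self (n := N - 1)
    omega
  calc (1 + m) * N ≤ (2 + m) * 2 ^ (N - 1) := Nat.mul_le_mul (by omega) h1
    _ ≤ (2 + m) * (2 + m) ^ (N - 1) :=
        Nat.mul_le_mul_left _ (Nat.pow_le_pow_left (by omega) _)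
    _ = (2 + m) ^ (N - 1 + 1) := (pow_succ' _ _).symm
    _ = (2 + m) ^ N := by congr 1; omega

/-- For `a = a₁/a₂ ∈ K = F_q(t)` with `a₁, a₂` nonzero coprime, and a non-constant
`P(T) ∈ F_q[T]`, the map `z ↦ a₂^{q^{r·deg P}}·Φ^{(z)}_{P(T)}(a)` is a polynomial in
`F_q[t][z]` of height at most `(2 + deg a)^{q^{r·deg P}}`, where
`deg a = max(deg a₁, deg a₂)`. -/
theorem drinfeld_act_integrality_height
    {Fq : Type*} [Field Fq] [Fintype Fq] (q r : ℕ)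
    (hq : Fintype.card Fq = q) (hr : 2 ≤ r)
    (a₁ a₂ : Polynomial Fq) (ha₁ : a₁ ≠ 0) (ha₂ : a₂ ≠ 0) (hcop : IsCoprime a₁ a₂)
    (a : RatFunc Fq)
    (ha : a = algebraMap (Polynomial Fq) (RatFunc Fq) a₁ /
            algebraMap (Polynomial Fq) (RatFunc Fq) a₂)
    (P : Polynomial Fq) (hP : P.natDegree ≠ 0) :
    ∃ G : Polynomial (Polynomial Fq),
      G.map (algebraMap (Polynomial Fq) (RatFunc Fq)) =
        C ((algebraMap (Polynomial Fq) (RatFunc Fq) a₂) ^ q ^ (r * P.natDegree)) *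
          drinfeldPolyAct q r P a ∧
      polyHeight G ≤ (2 + max a₁.natDegree a₂.natDegree) ^ q ^ (r * P.natDegree) := by
  classical
  have hq2 : 2 ≤ q := by
    have := Fintype.one_lt_card (α := Fq)
    omega
  have hq1 : 1 ≤ q := by omega
  have hr1 : 1 ≤ r := by omega
  set alg := algebraMap (Polynomial Fq) (RatFunc Fq) with halg
  have hA₂ : alg a₂ ≠ 0 := RatFunc.algebraMap_ne_zero ha₂
  have haa : alg a₁ = a * alg a₂ := by
    rw [ha]
    field_simp
  set d := P.natDegree with hd
  set m := max a₁.natDegree a₂.natDegree with hm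
  set N := q ^ (r * d) with hN
  have hd1 : 1 ≤ d := by omega
  have hQle : ∀ i ∈ Finset.range (d + 1), q ^ (r * i) ≤ N := by
    intro i hi
    exact Nat.pow_le_pow_right hq1
      (Nat.mul_le_mul le_rfl (Nat.lt_succ_iff.mp (Finset.mem_range.mp hi)))
  have hN4 : 4 ≤ N := by
    have hrd : 2 ≤ r * d := by
      calc 2 = 2 * 1 := rfl
        _ ≤ r * d := Nat.mul_le_mul hr hd1
    calc (4 : ℕ) = 2 ^ 2 := rfl
      _ ≤ 2 ^ (r * d) := Nat.pow_le_pow_right (by norm_num) hrd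
      _ ≤ q ^ (r * d) := Nat.pow_le_pow_left hq2 _
  refine ⟨∑ i ∈ Finset.range (d + 1),
      C (Polynomial.C (P.coeff i) * a₂ ^ (N - q ^ (r * i))) * Bseq q r a₁ a₂ i, ?_, ?_⟩
  · rw [← Polynomial.coe_mapRingHom, map_sum, drinfeldPolyAct, Finset.mul_sum]
    refine Finset.sum_congr rfl fun i hi => ?_
    have hiQ : q ^ (r * i) ≤ N := hQle i hi
    rw [Polynomial.coe_mapRingHom, Polynomial.map_mul, Polynomial.map_C,
      Bseq_map q r hq1 hr1 a₁ a₂ a haa i]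
    have hc : algebraMap Fq (RatFunc Fq) (P.coeff i) = alg (Polynomial.C (P.coeff i)) := by
      rw [halg, IsScalarTower.algebraMap_apply Fq (Polynomial Fq) (RatFunc Fq),
        Polynomial.algebraMap_eq]
    rw [hc, map_mul, map_pow]
    have k : C (alg a₂) ^ (N - q ^ (r * i)) * C (alg a₂) ^ q ^ (r * i)
        = (C (alg a₂) : Polynomial (RatFunc Fq)) ^ N := by
      rw [← pow_add, Nat.sub_add_cancel hiQ]
    calc C (alg (Polynomial.C (P.coeff i)) * alg a₂ ^ (N - q ^ (r * i))) *
          (C (alg a₂ ^ q ^ (r * i)) * (drinfeldPolyPhi q r)^[i] (C a))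
        = (C (alg a₂) ^ (N - q ^ (r * i)) * C (alg a₂) ^ q ^ (r * i)) *
            (C (alg (Polynomial.C (P.coeff i))) * (drinfeldPolyPhi q r)^[i] (C a)) := by
          simp only [map_mul, map_pow]
          ring
      _ = C (alg a₂) ^ N *
            (C (alg (Polynomial.C (P.coeff i))) * (drinfeldPolyPhi q r)^[i] (C a)) := by
          rw [k]
      _ = C (alg a₂ ^ N) *
            (C (alg (Polynomial.C (P.coeff i))) * (drinfeldPolyPhi q r)^[i] (C a)) := by
          rw [map_pow]
  · refine (polyHeight_sum_le _ _ ?_).trans (final_num m N hN4)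
    intro i hi
    have hiQ : q ^ (r * i) ≤ N := hQle i hi
    have hB : polyHeight (Bseq q r a₁ a₂ i) ≤ (1 + m) * q ^ (r * i) :=
      Bseq_height q r hq2 hr1 a₁ a₂ m (le_max_left _ _) (le_max_right _ _) i
    have hdeg : (Polynomial.C (P.coeff i) * a₂ ^ (N - q ^ (r * i))).natDegree
        ≤ (N - q ^ (r * i)) * m := by
      refine natDegree_mul_le.trans ?_
      rw [natDegree_C, zero_add]
      exact natDegree_pow_le.trans (Nat.mul_le_mul_left _ (le_max_right _ _))
    refine (polyHeight_mul_le _ _).trans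
      (((add_le_add ((polyHeight_C_le _).trans hdeg) hB)).trans ?_)
    set A := q ^ (r * i)
    have e3 : (N - A) * m = N * m - A * m := Nat.sub_mul _ _ _
    have e4 : A * m ≤ N * m := Nat.mul_le_mul_right _ hiQ
    have g1 : (1 + m) * A = A + A * m := by ring
    have g2 : (1 + m) * N = N + N * m := by ring
    omega
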